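/- Let F ∈ C⁰(ℝⁿ,ℝⁿ) with F(0) = 0. Consider the following three properties of solutions of ẋ = F(x): (A) for every ε > 0 there exists η > 0 such that every solution with |x(0)| < η satisfies x(ε) = 0; (B) for every ε > 0 there exists η > 0 such that every solution with |x(0)| < η satisfies |x(t)| < ε for all t ∈ [0,+∞); (C) every solution with x(0) = 0 satisfies x(t) = 0 for all t ∈ [0,+∞). Then the conjunction (A) and (B) is equivalent to the conjunction (A) and (C). -/

import Mathlib

open Set Filter

/-- Signed power: `⌊x⌉^a = sign(x) * |x|^a`. -/
noncomputable def spow (x a : ℝ) : ℝ := Real.sign x * |x| ^ a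

/-- Dilation `Λ_r(l, x) = (l^{r₁} x₁, …, l^{rₙ} xₙ)`. -/
noncomputable def dil {n : ℕ} (r : Fin n → ℝ) (l : ℝ) (x : Fin n → ℝ) : Fin n → ℝ :=
  fun i => l ^ r i * x i

/-- `x` is a solution of `ẋ = F(x)` on `[s, ∞)`. -/
def IsSolOn {E : Type*} [NormedAddCommGroup E] [NormedSpace ℝ E]
    (F : E → E) (x : ℝ → E) (s : ℝ) : Prop :=
  ∀ t ∈ Set.Ici s, HasDerivWithinAt x (F (x t)) (Set.Ici s) t

/-- The origin is (locally) asymptotically stable for `ẋ = F(x)`. -/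
def AsympStable {E : Type*} [NormedAddCommGroup E] [NormedSpace ℝ E] (F : E → E) : Prop :=
  (∀ ε > 0, ∃ η > 0, ∀ x : ℝ → E, IsSolOn F x 0 → ‖x 0‖ < η → ∀ t ≥ 0, ‖x t‖ < ε) ∧
  (∃ δ > 0, ∀ x : ℝ → E, IsSolOn F x 0 → ‖x 0‖ < δ →
    Filter.Tendsto x Filter.atTop (nhds 0))

/-- The origin is small-time stable for `ẋ = F(x)`. -/
def SmallTimeStable {E : Type*} [NormedAddCommGroup E] [NormedSpace ℝ E] (F : E → E) : Prop :=
  ∀ ε > 0, ∃ η > 0, ∀ x : ℝ → E, IsSolOn F x 0 → ‖x 0‖ < η →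
    x ε = 0 ∧ ∀ t ≥ 0, ‖x t‖ < ε

open Topology

/-- Equivalence of the two formulations of small-time stability:
(A) ∧ (B) ⟺ (A) ∧ (C), where (A) is small-time reachability of `0`, (B) is
stability, and (C) is that the solution starting at `0` stays at `0`. -/
theorem stmt18 {n : ℕ} (F : (Fin n → ℝ) → (Fin n → ℝ)) (hF : Continuous F)
    (hF0 : F 0 = 0) :
    ((∀ ε > (0:ℝ), ∃ η > (0:ℝ), ∀ x : ℝ → Fin n → ℝ,
        IsSolOn F x 0 → ‖x 0‖ < η → x ε = 0) ∧
     (∀ ε > (0:ℝ), ∃ η > (0:ℝ), ∀ x : ℝ → Fin n → ℝ,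
        IsSolOn F x 0 → ‖x 0‖ < η → ∀ t ≥ 0, ‖x t‖ < ε)) ↔
    ((∀ ε > (0:ℝ), ∃ η > (0:ℝ), ∀ x : ℝ → Fin n → ℝ,
        IsSolOn F x 0 → ‖x 0‖ < η → x ε = 0) ∧
     (∀ x : ℝ → Fin n → ℝ, IsSolOn F x 0 → x 0 = 0 → ∀ t ≥ 0, x t = 0)) := by
  -- (C) is a consequence of (A)
  have hAC : (∀ ε > (0:ℝ), ∃ η > (0:ℝ), ∀ x : ℝ → Fin n → ℝ,
      IsSolOn F x 0 → ‖x 0‖ < η → x ε = 0) →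
      ∀ x : ℝ → Fin n → ℝ, IsSolOn F x 0 → x 0 = 0 → ∀ t ≥ 0, x t = 0 := by
    intro hA x hx hx0 t ht
    rcases eq_or_lt_of_le ht with h | h
    · rw [← h]; exact hx0
    · obtain ⟨η, hη, hsol⟩ := hA t h
      exact hsol x hx (by rw [hx0]; simpa using hη)
  constructor
  · rintro ⟨hA, _hB⟩
    exact ⟨hA, hAC hA⟩
  · rintro ⟨hA, hC⟩
    refine ⟨hA, ?_⟩
    intro ε hε
    -- bound on ‖F‖ on the closed ball of radius ε
    obtain ⟨y₀, hy₀, hmax⟩ := (isCompact_closedBall (0 : Fin n → ℝ) ε).exists_isMaxOn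
      ⟨0, Metric.mem_closedBall_self hε.le⟩ hF.norm.continuousOn
    set M : ℝ := ‖F y₀‖ + 1 with hM
    have hMpos : 0 < M := by positivity
    set ε' : ℝ := ε / (2 * M) with hε'def
    have hε'pos : 0 < ε' := by positivity
    obtain ⟨η', hη'pos, hη'⟩ := hA ε' hε'pos
    refine ⟨min η' (ε / 2), lt_min hη'pos (by positivity), ?_⟩
    intro x hx hx0 t ht
    by_contra hcon
    push_neg at hcon
    -- x vanishes for all s ≥ ε'
    have hxε' : x ε' = 0 := hη' x hx (lt_of_lt_of_le hx0 (min_le_left _ _))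
    have hshift : IsSolOn F (fun s => x (s + ε')) 0 := by
      intro s hs
      have h1 : HasDerivWithinAt (fun u : ℝ => u + ε') 1 (Ici 0) s :=
        ((hasDerivAt_id s).add_const ε').hasDerivWithinAt
      have h2 := hx (s + ε') (by simp only [mem_Ici] at hs ⊢; linarith)
      have h3 : MapsTo (fun u : ℝ => u + ε') (Ici 0) (Ici 0) := fun u hu => by
        simp only [mem_Ici] at hu ⊢; linarith
      simpa [Function.comp_def] using h2.scomp s h1 h3
    have hzero : ∀ s : ℝ, ε' ≤ s → x s = 0 := by
      intro s hs
      have := hC (fun u => x (u + ε')) hshift (by simpa using hxε') (s - ε') (by linarith)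
      simpa using this
    -- the exceptional time t is < ε'
    have htε' : t < ε' := by
      by_contra h
      push_neg at h
      rw [hzero t h] at hcon
      simp at hcon
      linarith
    -- first time the solution reaches norm ε
    set S : Set ℝ := Icc 0 t ∩ {s | ε ≤ ‖x s‖} with hS
    have hxcont : ContinuousOn x (Ici 0) := fun s hs => (hx s hs).continuousWithinAt
    have hScl : IsClosed S := by
      have : ContinuousOn (fun s => ‖x s‖) (Icc 0 t) :=
        (hxcont.mono Icc_subset_Ici_self).norm
      exact this.preimage_isClosed_of_isClosed isClosed_Icc isClosed_Ici
    have hSne : S.Nonempty := ⟨t, ⟨⟨ht, le_refl t⟩, hcon⟩⟩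
    have hSbdd : BddBelow S := ⟨0, fun s hs => hs.1.1⟩
    set τ : ℝ := sInf S with hτdef
    have hτS : τ ∈ S := hScl.csInf_mem hSne hSbdd
    have hτ0 : 0 < τ := by
      rcases lt_or_eq_of_le hτS.1.1 with h | h
      · exact h
      · exfalso
        have : ε ≤ ‖x 0‖ := by rw [h]; exact hτS.2
        have h2 : ‖x 0‖ < ε / 2 := lt_of_lt_of_le hx0 (min_le_right _ _)
        linarith
    have hτlt : τ < ε' := lt_of_le_of_lt hτS.1.2 htε'
    have hlt : ∀ s : ℝ, 0 ≤ s → s < τ → ‖x s‖ < ε := by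
      intro s hs0 hsτ
      by_contra h
      push_neg at h
      have : s ∈ S := ⟨⟨hs0, le_trans hsτ.le hτS.1.2⟩, h⟩
      exact absurd (csInf_le hSbdd this) (not_le.mpr hsτ)
    -- ‖x τ‖ ≤ ε by continuity from the left
    have hτle : ‖x τ‖ ≤ ε := by
      have hne : (𝓝[Ico 0 τ] τ).NeBot := by
        rw [← mem_closure_iff_nhdsWithin_neBot, closure_Ico hτ0.ne]
        exact ⟨hτ0.le, le_refl τ⟩
      have hcw : ContinuousWithinAt (fun s => ‖x s‖) (Ico 0 τ) τ :=
        ((hxcont τ hτ0.le).mono Ico_subset_Ici_self).norm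
      exact le_of_tendsto hcw (eventually_mem_nhdsWithin.mono
        fun s hs => (hlt s hs.1 hs.2).le)
    have hball : ∀ s ∈ Icc 0 τ, ‖x s‖ ≤ ε := by
      intro s hs
      rcases lt_or_eq_of_le hs.2 with h | h
      · exact (hlt s hs.1 h).le
      · rw [h]; exact hτle
    -- mean value inequality on [0, τ]
    have hderiv : ∀ s ∈ Icc 0 τ, HasDerivWithinAt x (F (x s)) (Icc 0 τ) s :=
      fun s hs => (hx s hs.1).mono Icc_subset_Ici_self
    have hbound : ∀ s ∈ Icc 0 τ, ‖F (x s)‖ ≤ M := by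
      intro s hs
      have : x s ∈ Metric.closedBall (0 : Fin n → ℝ) ε := by
        rw [mem_closedBall_zero_iff]; exact hball s hs
      have h := hmax this
      simp only [Set.mem_setOf_eq] at h
      linarith
    have hmvt := Convex.norm_image_sub_le_of_norm_hasDerivWithin_le hderiv hbound
      (convex_Icc 0 τ) (left_mem_Icc.mpr hτ0.le) (right_mem_Icc.mpr hτ0.le)
    -- conclude
    have h1 : ε ≤ ‖x τ‖ := hτS.2
    have h2 : ‖x 0‖ < ε / 2 := lt_of_lt_of_le hx0 (min_le_right _ _)
    have h3 : ‖x τ‖ - ‖x 0‖ ≤ ‖x τ - x 0‖ := norm_sub_norm_le _ _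
    have h4 : M * ‖τ - (0:ℝ)‖ = M * τ := by rw [sub_zero, Real.norm_eq_abs, abs_of_pos hτ0]
    have h5 : M * τ < M * ε' := by exact mul_lt_mul_of_pos_left hτlt hMpos
    have h6 : M * ε' = ε / 2 := by
      rw [hε'def]; field_simp
    rw [h4] at hmvt
    clear_value M ε' τ
    linarith
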